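/- The dual of a strict join is the strict join of the duals: for properly convex compact domains A of dimension k and B of dimension n−k−1 lying in complementary subspaces, (A * B)* = A* * B*. -/

import Mathlib

open scoped Pointwise

/-- Zero lies in the closure of any nonempty cone. -/
lemma zero_mem_closure_cone' {E : Type*} [NormedAddCommGroup E] [NormedSpace ℝ E]
    {C : Set E} (hne : C.Nonempty) (hcone : ∀ x ∈ C, ∀ t : ℝ, 0 < t → t • x ∈ C) :
    (0 : E) ∈ closure C := by
  obtain ⟨x, hx⟩ := hne
  have htend : Filter.Tendsto (fun m : ℕ => (1/(m+1) : ℝ) • x) Filter.atTop (nhds 0) := by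
    have h := tendsto_one_div_add_atTop_nhds_zero_nat (𝕜 := ℝ)
    simpa using h.smul_const x
  exact mem_closure_of_tendsto htend
    (Filter.Eventually.of_forall fun m => hcone x hx _ (by positivity))

/-- The dual of a strict join is the strict join of the duals.
A properly convex compact `k`-dimensional domain `A` and `(n-k-1)`-dimensional
domain `B` in complementary subspaces of `Sⁿ` correspond to convex cones
`CA ⊆ VA`, `CB ⊆ VB` with `VA, VB` complementary subspaces of `ℝ^{n+1}` of
dimensions `k+1` and `n-k`.  The strict join `A * B` corresponds to the cone
`CA + CB`, and the dual of `A` (resp. `B`) corresponds to the cone `DA` (resp.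
`DB`) of functionals vanishing on `VB` (resp. `VA`) and strictly positive on
`closure CA ∖ {0}` (resp. `closure CB ∖ {0}`), using the direct sum
decomposition `ℝ^{(n+1)*} = VA* ⊕ VB*`.  Then `(A * B)* = A* * B*`. -/
theorem dual_of_strict_join
    {n k : ℕ} (VA VB : Submodule ℝ (EuclideanSpace ℝ (Fin (n + 1))))
    (hcompl : IsCompl VA VB)
    (hdimA : Module.finrank ℝ VA = k + 1)
    (hdimB : Module.finrank ℝ VB = n - k)
    (CA CB : Set (EuclideanSpace ℝ (Fin (n + 1))))
    (hCAsub : CA ⊆ (VA : Set (EuclideanSpace ℝ (Fin (n + 1)))))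
    (hCBsub : CB ⊆ (VB : Set (EuclideanSpace ℝ (Fin (n + 1)))))
    (hCAconv : Convex ℝ CA) (hCAcone : ∀ x ∈ CA, ∀ t : ℝ, 0 < t → t • x ∈ CA)
    (hCAne : CA.Nonempty)
    (hCAprop : ∀ v ∈ closure CA, -v ∈ closure CA → v = 0)
    (hCBconv : Convex ℝ CB) (hCBcone : ∀ x ∈ CB, ∀ t : ℝ, 0 < t → t • x ∈ CB)
    (hCBne : CB.Nonempty)
    (hCBprop : ∀ v ∈ closure CB, -v ∈ closure CB → v = 0) :
    {f : EuclideanSpace ℝ (Fin (n + 1)) →ₗ[ℝ] ℝ |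
        ∀ x ∈ closure (CA + CB), x ≠ 0 → 0 < f x} =
      {f : EuclideanSpace ℝ (Fin (n + 1)) →ₗ[ℝ] ℝ |
          ∃ fa fb : EuclideanSpace ℝ (Fin (n + 1)) →ₗ[ℝ] ℝ,
            (∀ x ∈ VB, fa x = 0) ∧ (∀ x ∈ closure CA, x ≠ 0 → 0 < fa x) ∧
            (∀ x ∈ VA, fb x = 0) ∧ (∀ x ∈ closure CB, x ≠ 0 → 0 < fb x) ∧
            f = fa + fb} := by
  classical
  -- the projection onto VA along VB, as a linear map E →ₗ E
  set p : EuclideanSpace ℝ (Fin (n + 1)) →ₗ[ℝ] EuclideanSpace ℝ (Fin (n + 1)) :=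
    VA.subtype ∘ₗ VA.projectionOnto VB hcompl with hp
  have hpA : ∀ a ∈ VA, p a = a := fun a ha => by
    simp [hp, Submodule.projectionOnto_apply_left hcompl ⟨a, ha⟩]
  have hpB : ∀ b ∈ VB, p b = 0 := fun b hb => by
    simp [hp, Submodule.projectionOnto_apply_right hcompl ⟨b, hb⟩]
  set q : EuclideanSpace ℝ (Fin (n + 1)) →ₗ[ℝ] EuclideanSpace ℝ (Fin (n + 1)) := LinearMap.id - p with hq
  have hpq : ∀ x, p x + q x = x := fun x => by simp [hq]
  have hqA : ∀ a ∈ VA, q a = 0 := fun a ha => by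
    simp [hq, hpA a ha]
  have hqB : ∀ b ∈ VB, q b = b := fun b hb => by
    simp [hq, hpB b hb]
  have hpcont : Continuous p := p.continuous_of_finiteDimensional
  have hqcont : Continuous q := q.continuous_of_finiteDimensional
  -- closures stay in the subspaces
  have hclA : closure CA ⊆ (VA : Set (EuclideanSpace ℝ (Fin (n + 1)))) :=
    (IsClosed.closure_subset_iff VA.closed_of_finiteDimensional).mpr hCAsub
  have hclB : closure CB ⊆ (VB : Set (EuclideanSpace ℝ (Fin (n + 1)))) :=
    (IsClosed.closure_subset_iff VB.closed_of_finiteDimensional).mpr hCBsub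
  have h0A : (0 : EuclideanSpace ℝ (Fin (n + 1))) ∈ closure CA := zero_mem_closure_cone' hCAne hCAcone
  have h0B : (0 : EuclideanSpace ℝ (Fin (n + 1))) ∈ closure CB := zero_mem_closure_cone' hCBne hCBcone
  -- p maps CA + CB into CA, q into CB
  have hpMaps : Set.MapsTo p (CA + CB) CA := by
    rintro x hx
    rw [Set.mem_add] at hx
    obtain ⟨a, ha, b, hb, rfl⟩ := hx
    have : p (a + b) = a := by
      rw [map_add, hpA a (hCAsub ha), hpB b (hCBsub hb), add_zero]
    rwa [this]
  have hqMaps : Set.MapsTo q (CA + CB) CB := by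
    rintro x hx
    rw [Set.mem_add] at hx
    obtain ⟨a, ha, b, hb, rfl⟩ := hx
    have : q (a + b) = b := by
      rw [map_add, hqA a (hCAsub ha), hqB b (hCBsub hb), zero_add]
    rwa [this]
  -- sum of closures is contained in closure of sum
  have hsum : ∀ a ∈ closure CA, ∀ b ∈ closure CB, a + b ∈ closure (CA + CB) := by
    intro a ha b hb
    exact map_mem_closure₂ continuous_add ha hb fun x hx y hy => Set.add_mem_add hx hy
  ext f
  simp only [Set.mem_setOf_eq]
  constructor
  · -- forward: decompose f as f∘p + f∘q
    intro hf
    refine ⟨f ∘ₗ p, f ∘ₗ q, fun x hx => by simp [hpB x hx], ?_,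
      fun x hx => by simp [hqA x hx], ?_, ?_⟩
    · intro a ha hane
      have haE : a ∈ closure (CA + CB) := by simpa using hsum a ha 0 h0B
      have : f (p a) = f a := by rw [hpA a (hclA ha)]
      simpa [this] using hf a haE hane
    · intro b hb hbne
      have hbE : b ∈ closure (CA + CB) := by simpa using hsum 0 h0A b hb
      have : f (q b) = f b := by rw [hqB b (hclB hb)]
      simpa [this] using hf b hbE hbne
    · ext x
      simp [← map_add, hpq x]
  · -- backward
    rintro ⟨fa, fb, hfaB, hfaA, hfbA, hfbB, rfl⟩
    intro x hx hxne
    have hax : p x ∈ closure CA := map_mem_closure hpcont hx hpMaps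
    have hbx : q x ∈ closure CB := map_mem_closure hqcont hx hqMaps
    have hfa_nonneg : 0 ≤ fa (p x) := by
      rcases eq_or_ne (p x) 0 with h | h
      · simp [h]
      · exact (hfaA _ hax h).le
    have hfb_nonneg : 0 ≤ fb (q x) := by
      rcases eq_or_ne (q x) 0 with h | h
      · simp [h]
      · exact (hfbB _ hbx h).le
    have hfax : fa x = fa (p x) := by
      conv_lhs => rw [← hpq x]
      rw [map_add, hfaB _ (hclB hbx), add_zero]
    have hfbx : fb x = fb (q x) := by
      conv_lhs => rw [← hpq x]
      rw [map_add, hfbA _ (hclA hax), zero_add]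
    have hne : p x ≠ 0 ∨ q x ≠ 0 := by
      by_contra h
      push_neg at h
      exact hxne (by rw [← hpq x, h.1, h.2, add_zero])
    have : 0 < fa (p x) + fb (q x) := by
      rcases hne with h | h
      · exact add_pos_of_pos_of_nonneg (hfaA _ hax h) hfb_nonneg
      · exact add_pos_of_nonneg_of_pos hfa_nonneg (hfbB _ hbx h)
    simpa [LinearMap.add_apply, hfax, hfbx] using this
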